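/- Let G be a finite non-abelian p-group, G = H₁ × H₂ × ⋯ × Hₙ an internal direct product of normal subgroups where H₁ is abelian and nontrivial and each Hᵢ for i ≥ 2 is non-abelian. Then G has a non-inner central automorphism of order p fixing Φ(G) elementwise. -/

import Mathlib

/-- A finite non-abelian p-group that is an internal direct product
H₁ × ⋯ × Hₙ with H₁ nontrivial abelian and each Hᵢ (i ≥ 2) non-abelian has a
non-inner central automorphism of order p fixing Φ(G) elementwise. -/
theorem noninner_central_aut_of_multi_factor {p : ℕ} (hp : p.Prime)
    {G : Type*} [Group G] [Fintype G] (hpG : IsPGroup p G)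
    (hG : ∃ a b : G, a * b ≠ b * a)
    (n : ℕ) (hn : 0 < n) (H : Fin n → Subgroup G)
    (hnorm : ∀ i, (H i).Normal)
    (hsup : ⨆ i, H i = ⊤) (hind : iSupIndep H)
    (hH1nt : H ⟨0, hn⟩ ≠ ⊥)
    (hH1ab : ∀ a ∈ H ⟨0, hn⟩, ∀ b ∈ H ⟨0, hn⟩, a * b = b * a)
    (hHinab : ∀ i : Fin n, i ≠ ⟨0, hn⟩ → ∃ a ∈ H i, ∃ b ∈ H i, a * b ≠ b * a) :
    ∃ α : G ≃* G, (∀ g : G, g⁻¹ * α g ∈ Subgroup.center G) ∧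
      orderOf α = p ∧ (¬ ∃ x : G, ∀ g : G, α g = x⁻¹ * g * x) ∧
      ∀ w ∈ frattini G, α w = w := by
  classical
  haveI : Fact p.Prime := ⟨hp⟩
  set i₀ : Fin n := ⟨0, hn⟩ with hi₀
  -- n ≥ 2
  have hn2 : 1 < n := by
    by_contra hcon
    push_neg at hcon
    have hn1 : n = 1 := le_antisymm hcon hn
    subst hn1
    have htop : (⊤ : Subgroup G) ≤ H i₀ := by
      rw [← hsup]
      exact iSup_le fun i => le_of_eq (congrArg H (Subsingleton.elim i i₀))
    obtain ⟨a, b, hab⟩ := hG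
    exact hab (hH1ab a (htop (Subgroup.mem_top a)) b (htop (Subgroup.mem_top b)))
  set i₁ : Fin n := ⟨1, hn2⟩ with hi₁
  have hne : i₁ ≠ i₀ := by
    intro h
    simpa using congrArg Fin.val h
  -- elements of a factor commuting with the whole factor are central in G
  have hcent : ∀ (i : Fin n) (x : G), x ∈ H i → (∀ y ∈ H i, x * y = y * x) →
      x ∈ Subgroup.center G := by
    intro i x hx hcomm
    rw [Subgroup.mem_center_iff]
    intro g
    have hg : g ∈ ⨆ j, H j := hsup ▸ Subgroup.mem_top g
    refine Subgroup.iSup_induction H (C := fun g => g * x = x * g) hg ?_ (by simp) ?_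
    · intro j y hy
      by_cases hji : j = i
      · exact (hcomm y (hji ▸ hy)).symm
      · exact (Subgroup.commute_of_normal_of_disjoint (H i) (H j) (hnorm i) (hnorm j)
          (hind.pairwiseDisjoint (fun h => hji h.symm)) x y hx hy).symm.eq
    · intro a b ha hb
      calc a * b * x = a * (x * b) := by rw [mul_assoc, hb]
        _ = x * (a * b) := by rw [← mul_assoc, ha, mul_assoc]
  have hH1c : ∀ a ∈ H i₀, a ∈ Subgroup.center G := fun a ha =>
    hcent i₀ a ha fun y hy => hH1ab a ha y hy
  -- a central element z of order p inside H i₁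
  obtain ⟨a, haK, b, hbK, hab⟩ := hHinab i₁ hne
  haveI : Nontrivial (H i₁) := by
    refine ⟨⟨a, haK⟩, 1, fun h => hab ?_⟩
    have ha1 : a = 1 := by simpa using congrArg Subtype.val h
    simp [ha1]
  have hK : IsPGroup p (H i₁) := hpG.to_subgroup (H i₁)
  haveI := hK.center_nontrivial
  have hZ : IsPGroup p (Subgroup.center (H i₁)) := hK.to_subgroup _
  have hdvd : p ∣ Nat.card (Subgroup.center (H i₁)) := by
    obtain ⟨k, hk⟩ := hZ.exists_card_eq
    rcases Nat.eq_zero_or_pos k with hk0 | hkpos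
    · rw [hk0, pow_zero] at hk
      exact absurd (Nat.card_eq_one_iff_unique.mp hk).1 (not_subsingleton _)
    · exact hk ▸ dvd_pow_self p hkpos.ne'
  obtain ⟨zc, hzc⟩ := exists_prime_orderOf_dvd_card' p hdvd
  set z : G := ((zc : H i₁) : G) with hzdef
  have hzord : orderOf z = p := by
    rw [hzdef, Subgroup.orderOf_coe, Subgroup.orderOf_coe, hzc]
  have hzK : z ∈ H i₁ := (zc : H i₁).2
  have hzcent : z ∈ Subgroup.center G := by
    refine hcent i₁ z hzK fun y hy => ?_
    have := Subgroup.mem_center_iff.mp zc.2 ⟨y, hy⟩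
    exact (congrArg Subtype.val this).symm
  -- the complement N of H i₀ and a maximal subgroup M above it
  set N : Subgroup G := ⨆ (j) (_ : j ≠ i₀), H j with hN
  have hdisj : Disjoint (H i₀) N := hind i₀
  have hKN : H i₁ ≤ N := le_iSup₂ (f := fun j (_ : j ≠ i₀) => H j) i₁ hne
  have hNtop : N ≠ ⊤ := by
    intro h
    exact hH1nt (hdisj.eq_bot_of_le (h ▸ le_top))
  have hsupN : H i₀ ⊔ N = ⊤ := by
    rw [← hsup]
    refine le_antisymm ?_ (iSup_le fun j => ?_)
    · rw [hsup]; exact le_top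
    · by_cases hj : j = i₀
      · exact hj ▸ le_sup_left
      · exact le_trans (le_iSup₂ (f := fun j (_ : j ≠ i₀) => H j) j hj) le_sup_right
  obtain ⟨M, hM, hNM⟩ := (IsCoatomic.eq_top_or_exists_le_coatom N).resolve_left hNtop
  haveI : Group.IsNilpotent G := hpG.isNilpotent
  haveI hMnormal : M.Normal := Subgroup.NormalizerCondition.normal_of_coatom M normalizerCondition_of_isNilpotent hM
  have hzM : z ∈ M := hNM (hKN hzK)
  -- the quotient by M has order p
  have hQp : IsPGroup p (G ⧸ M) := hpG.to_quotient M
  obtain ⟨g₀, hg₀⟩ : ∃ g : G, g ∉ M := by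
    by_contra hcon
    push_neg at hcon
    exact hM.1 (Subgroup.eq_top_iff' M |>.mpr hcon)
  haveI : Nontrivial (G ⧸ M) := by
    refine ⟨QuotientGroup.mk g₀, 1, fun h => hg₀ ?_⟩
    exact (QuotientGroup.eq_one_iff g₀).mp h
  have hdvdQ : p ∣ Nat.card (G ⧸ M) := by
    obtain ⟨k, hk⟩ := hQp.exists_card_eq
    rcases Nat.eq_zero_or_pos k with hk0 | hkpos
    · rw [hk0, pow_zero] at hk
      exact absurd (Nat.card_eq_one_iff_unique.mp hk).1 (not_subsingleton _)
    · exact hk ▸ dvd_pow_self p hkpos.ne'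
  obtain ⟨s, hs⟩ := exists_prime_orderOf_dvd_card' p hdvdQ
  have hStop : Subgroup.zpowers s = ⊤ := by
    set T : Subgroup G := (Subgroup.zpowers s).comap (QuotientGroup.mk' M) with hT
    have hMT : M ≤ T := by
      intro x hx
      have : QuotientGroup.mk' M x = 1 := (QuotientGroup.eq_one_iff x).mpr hx
      simp only [hT, Subgroup.mem_comap, this]
      exact Subgroup.one_mem _
    rcases eq_or_lt_of_le hMT with heq | hlt
    · exfalso
      have hmap : (Subgroup.zpowers s) = T.map (QuotientGroup.mk' M) :=
        (Subgroup.map_comap_eq_self_of_surjective (QuotientGroup.mk'_surjective M) _).symm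
      have hsbot : s ∈ T.map (QuotientGroup.mk' M) := by
        rw [← hmap]; exact Subgroup.mem_zpowers s
      obtain ⟨x, hxT, hxs⟩ := hsbot
      have hx1 : QuotientGroup.mk' M x = 1 := (QuotientGroup.eq_one_iff x).mpr (heq ▸ hxT)
      have : s = 1 := by rw [← hxs, hx1]
      rw [this, orderOf_one] at hs
      exact hp.one_lt.ne' hs.symm
    · have hTtop : T = ⊤ := hM.2 T hlt
      calc Subgroup.zpowers s
          = Subgroup.map (QuotientGroup.mk' M) T :=
            (Subgroup.map_comap_eq_self_of_surjective
              (QuotientGroup.mk'_surjective M) _).symm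
        _ = ⊤ := by
            rw [hTtop, Subgroup.map_top_of_surjective _ (QuotientGroup.mk'_surjective M)]
  have hQcard : Nat.card (G ⧸ M) = p := by
    have h1 : Nat.card (Subgroup.zpowers s) = orderOf s := Nat.card_zpowers s
    rw [hStop, Subgroup.card_top, hs] at h1
    exact h1
  -- the homomorphism χ
  have hzcard : Nat.card (Subgroup.zpowers z) = p := by rw [Nat.card_zpowers, hzord]
  let e : (G ⧸ M) ≃* (Subgroup.zpowers z) := mulEquivOfPrimeCardEq hQcard hzcard
  let χ : G →* G :=
    ((Subgroup.zpowers z).subtype.comp e.toMonoidHom).comp (QuotientGroup.mk' M)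
  have hχmem : ∀ g, χ g ∈ Subgroup.zpowers z := fun g => (e (QuotientGroup.mk g)).2
  have hzpM : Subgroup.zpowers z ≤ M := Subgroup.zpowers_le.mpr hzM
  have hzpC : Subgroup.zpowers z ≤ Subgroup.center G := Subgroup.zpowers_le.mpr hzcent
  have hχcent : ∀ g, χ g ∈ Subgroup.center G := fun g => hzpC (hχmem g)
  have hχM : ∀ g ∈ M, χ g = 1 := by
    intro g hg
    have h1 : QuotientGroup.mk' M g = 1 := (QuotientGroup.eq_one_iff g).mpr hg
    show ((e (QuotientGroup.mk' M g) : Subgroup.zpowers z) : G) = 1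
    rw [h1, map_one]
    rfl
  have hker : ∀ g, χ g = 1 → g ∈ M := by
    intro g hg
    have h1 : ((e (QuotientGroup.mk' M g) : Subgroup.zpowers z) : G) = 1 := hg
    have h2 : (e (QuotientGroup.mk' M g) : Subgroup.zpowers z) = 1 := Subtype.ext h1
    have h3 : (QuotientGroup.mk' M g : G ⧸ M) = 1 := by
      have := congrArg e.symm h2
      rw [MulEquiv.symm_apply_apply, map_one] at this
      exact this
    exact (QuotientGroup.eq_one_iff g).mp h3
  have hχχ : ∀ g, χ (χ g) = 1 := fun g => hχM _ (hzpM (hχmem g))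
  have hzp : z ^ p = 1 := by rw [← hzord]; exact pow_orderOf_eq_one z
  have hχpow : ∀ g, (χ g) ^ p = 1 := by
    intro g
    obtain ⟨m, hm⟩ := hχmem g
    rw [← hm, ← zpow_natCast, ← zpow_mul, mul_comm, zpow_mul, zpow_natCast, hzp, one_zpow]
  -- the automorphism α
  have hcomm' : ∀ (g h : G), h * χ g = χ g * h := fun g h =>
    (Subgroup.mem_center_iff.mp (hχcent g) h)
  let αhom : G →* G :=
    { toFun := fun g => g * χ g
      map_one' := by simp
      map_mul' := by
        intro g h
        show g * h * χ (g * h) = g * χ g * (h * χ h)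
        rw [map_mul, mul_assoc g h _, ← mul_assoc h (χ g) (χ h), hcomm' g h,
          mul_assoc (χ g) h (χ h), ← mul_assoc g (χ g) _] }
  have hαapp : ∀ g, αhom g = g * χ g := fun g => rfl
  have hαinj : Function.Injective αhom := by
    intro g h heq
    rw [hαapp, hαapp] at heq
    have hgh : χ g = χ h := by
      have h1 := congrArg χ heq
      rw [map_mul, map_mul, hχχ g, hχχ h, mul_one, mul_one] at h1
      exact h1
    rw [hgh] at heq
    exact mul_right_cancel heq
  let α : G ≃* G := MulEquiv.ofBijective αhom (Finite.injective_iff_bijective.mp hαinj)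
  have hα : ∀ g, α g = g * χ g := fun g => rfl
  -- the power formula
  have hpow : ∀ (k : ℕ) (g : G), (α ^ k) g = g * (χ g) ^ k := by
    intro k
    induction k with
    | zero => intro g; simp [pow_zero]
    | succ k ih =>
      intro g
      have h1 : (α ^ (k + 1)) g = (α ^ k) (α g) := by rw [pow_succ]; rfl
      rw [h1, ih, hα]
      rw [map_mul, hχχ g, mul_one]
      rw [mul_assoc, ← pow_succ']
  -- a central element outside M
  obtain ⟨h₀, hh₀H, hh₀M⟩ : ∃ h₀ ∈ H i₀, h₀ ∉ M := by
    by_contra hcon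
    push_neg at hcon
    have h1 : H i₀ ≤ M := hcon
    have : (⊤ : Subgroup G) ≤ M := by rw [← hsupN]; exact sup_le h1 hNM
    exact hM.1 (le_antisymm le_top this)
  have hχh₀ : χ h₀ ≠ 1 := fun hc => hh₀M (hker h₀ hc)
  have hαh₀ : α h₀ ≠ h₀ := by
    rw [hα]
    intro hc
    exact hχh₀ (by rwa [mul_eq_left] at hc)
  refine ⟨α, ?_, ?_, ?_, ?_⟩
  · intro g
    rw [hα, ← mul_assoc, inv_mul_cancel, one_mul]
    exact hχcent g
  · refine orderOf_eq_prime ?_ ?_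
    · ext g
      rw [hpow p g, hχpow g, mul_one]
      rfl
    · intro hc
      exact hαh₀ (by rw [hc]; rfl)
  · rintro ⟨x, hx⟩
    have hcentral := Subgroup.mem_center_iff.mp (hH1c h₀ hh₀H) x
    have : x⁻¹ * h₀ * x = h₀ := by
      rw [mul_assoc, ← hcentral, ← mul_assoc, inv_mul_cancel, one_mul]
    exact hαh₀ ((hx h₀).trans this)
  · intro w hw
    have hwM : w ∈ M := frattini_le_coatom hM hw
    rw [hα, hχM w hwM, mul_one]
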